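/- For each fixed k ≥ 1, the limit lim_{n→∞} f(n,k)^{1/n} exists and equals the convergent infinite product ∏_{l=1}^{∞} P_k(l)^{(1/l − 1/(l+1))·φ(D)/D}, where D = p_1···p_k. -/

import Mathlib

open Finset Filter
open scoped Classical

/-- A finite set of naturals is primitive: no element divides another distinct element. -/
def Primitive (S : Finset ℕ) : Prop := ∀ a ∈ S, ∀ b ∈ S, a ≠ b → ¬ a ∣ b

/-- `f n` is the number of primitive subsets of `{1,...,n}`. -/
noncomputable def f (n : ℕ) : ℕ :=
  ((Finset.Icc 1 n).powerset.filter Primitive).card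

/-- A natural is `k`-smooth: all its prime factors are at most the `k`-th prime. -/
def SmoothNat (k m : ℕ) : Prop := ∀ p, p.Prime → p ∣ m → p ≤ Nat.nth Nat.Prime (k - 1)

/-- A set is `k`-core: no two distinct elements `a ∣ b` with `b/a` having all
prime factors at most the `k`-th prime. -/
def KCore (k : ℕ) (S : Finset ℕ) : Prop :=
  ∀ a ∈ S, ∀ b ∈ S, a ≠ b → ¬ (a ∣ b ∧ SmoothNat k (b / a))

/-- `fk n k` is the number of `k`-core subsets of `{1,...,n}`. -/
noncomputable def fk (n k : ℕ) : ℕ :=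
  ((Finset.Icc 1 n).powerset.filter (KCore k)).card

/-- `Dk k` is the product of the first `k` primes. -/
noncomputable def Dk (k : ℕ) : ℕ := ∏ i ∈ Finset.range k, Nat.nth Nat.Prime i

/-- `Pk k x` is the number of primitive subsets of the set of `k`-smooth integers in `{1,...,x}`. -/
noncomputable def Pk (k x : ℕ) : ℕ :=
  (((Finset.Icc 1 x).filter (SmoothNat k)).powerset.filter Primitive).card

/-! ### Part 1: basics on `Dk`, smooth numbers, smooth/rough parts -/

lemma Dk_pos (k : ℕ) : 0 < Dk k :=
  Finset.prod_pos fun i _ => (Nat.prime_nth_prime i).pos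

lemma two_le_Dk {k : ℕ} (hk : 1 ≤ k) : 2 ≤ Dk k := by
  have h0 : (0:ℕ) ∈ Finset.range k := Finset.mem_range.mpr hk
  have hdvd : Nat.nth Nat.Prime 0 ∣ Dk k := Finset.dvd_prod_of_mem _ h0
  have := (Nat.prime_nth_prime 0).two_le
  calc (2:ℕ) ≤ Nat.nth Nat.Prime 0 := this
    _ ≤ Dk k := Nat.le_of_dvd (Dk_pos k) hdvd

lemma prime_dvd_Dk_iff {k : ℕ} (hk : 1 ≤ k) {q : ℕ} (hq : q.Prime) :
    q ∣ Dk k ↔ q ≤ Nat.nth Nat.Prime (k - 1) := by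
  constructor
  · intro h
    obtain ⟨i, hi, hdvd⟩ := (hq.prime.dvd_finset_prod_iff _).mp h
    have : q = Nat.nth Nat.Prime i :=
      ((Nat.prime_nth_prime i).eq_one_or_self_of_dvd q hdvd).resolve_left hq.ne_one
    rw [this]
    have hik := Finset.mem_range.mp hi
    exact (Nat.nth_le_nth Nat.infinite_setOf_prime).mpr (by omega)
  · intro h
    have hcount : Nat.nth Nat.Prime (Nat.count Nat.Prime q) = q := Nat.nth_count hq
    have hlt : Nat.count Nat.Prime q ≤ k - 1 := by
      by_contra hc
      push_neg at hc
      have := (Nat.nth_lt_nth Nat.infinite_setOf_prime).mpr hc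
      rw [hcount] at this
      exact absurd (this.trans_le h) (lt_irrefl _)
    have hmem : Nat.count Nat.Prime q ∈ Finset.range k := Finset.mem_range.mpr (by omega)
    have := Finset.dvd_prod_of_mem (Nat.nth Nat.Prime) hmem
    rw [hcount] at this
    exact this

lemma smoothNat_iff {k : ℕ} (hk : 1 ≤ k) {m : ℕ} :
    SmoothNat k m ↔ ∀ q, q.Prime → q ∣ m → q ∣ Dk k := by
  constructor
  · intro h q hq hqm
    exact (prime_dvd_Dk_iff hk hq).mpr (h q hq hqm)
  · intro h q hq hqm
    exact (prime_dvd_Dk_iff hk hq).mp (h q hq hqm)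

lemma smoothNat_of_dvd {k d s : ℕ} (hds : d ∣ s) (hs : SmoothNat k s) : SmoothNat k d :=
  fun q hq hqd => hs q hq (hqd.trans hds)

lemma smoothNat_mul {k s t : ℕ} (hs : SmoothNat k s) (ht : SmoothNat k t) :
    SmoothNat k (s * t) := by
  intro q hq hqd
  rcases (Nat.Prime.dvd_mul hq).mp hqd with h | h
  · exact hs q hq h
  · exact ht q hq h

lemma smooth_dvd_pow {k : ℕ} (hk : 1 ≤ k) {s : ℕ} (hs : s ≠ 0) (h : SmoothNat k s) :
    s ∣ Dk k ^ s := by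
  have hD : Dk k ≠ 0 := (Dk_pos k).ne'
  have hDs : Dk k ^ s ≠ 0 := pow_ne_zero _ hD
  rw [← Nat.factorization_le_iff_dvd hs hDs]
  intro q
  rcases Nat.eq_zero_or_pos (s.factorization q) with h0 | hpos
  · simp [h0]
  · have hq : q.Prime := by
      have hmem := Finsupp.mem_support_iff.mpr hpos.ne'
      rw [Nat.support_factorization] at hmem
      exact Nat.prime_of_mem_primeFactors hmem
    have hqs : q ∣ s := Nat.dvd_of_factorization_pos hpos.ne'
    have hqD : q ∣ Dk k := (smoothNat_iff hk).mp h q hq hqs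
    have h1 : 1 ≤ (Dk k).factorization q := (hq.factorization_pos_of_dvd hD hqD)
    have h2 : s.factorization q < s := Nat.factorization_lt q hs
    rw [Nat.factorization_pow]
    simp only [Finsupp.smul_apply, smul_eq_mul]
    calc s.factorization q ≤ s := h2.le
      _ = s * 1 := (mul_one s).symm
      _ ≤ s * (Dk k).factorization q := Nat.mul_le_mul_left s h1

/-! ### Part 2: smooth and rough parts -/

noncomputable def sp (k m : ℕ) : ℕ := Nat.gcd m (Dk k ^ m)
noncomputable def rp (k m : ℕ) : ℕ := m / sp k m

lemma sp_dvd (k m : ℕ) : sp k m ∣ m := Nat.gcd_dvd_left _ _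

lemma sp_pos (k : ℕ) {m : ℕ} (hm : m ≠ 0) : 0 < sp k m :=
  Nat.pos_of_ne_zero fun h => hm (by simpa [h] using Nat.eq_zero_of_gcd_eq_zero_left h)

lemma sp_mul_rp (k : ℕ) (m : ℕ) : sp k m * rp k m = m :=
  Nat.mul_div_cancel' (sp_dvd k m)

lemma rp_dvd (k m : ℕ) : rp k m ∣ m := by
  conv_rhs => rw [← sp_mul_rp k m]
  exact dvd_mul_left _ _

lemma rp_pos (k : ℕ) {m : ℕ} (hm : m ≠ 0) : 0 < rp k m :=
  Nat.pos_of_ne_zero fun h => hm (by rw [← sp_mul_rp k m, h, mul_zero])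

lemma smooth_sp (k : ℕ) (m : ℕ) : SmoothNat k (sp k m) := by
  intro q hq hqd
  have hqD : q ∣ Dk k := hq.dvd_of_dvd_pow (hqd.trans (Nat.gcd_dvd_right _ _))
  have hkpos : 0 < k := by
    rcases Nat.eq_zero_or_pos k with h0 | h
    · exfalso
      have : Dk k = 1 := by simp [Dk, h0]
      rw [this] at hqD
      exact hq.ne_one (Nat.eq_one_of_dvd_one hqD)
    · exact h
  exact (prime_dvd_Dk_iff hkpos hq).mp hqD

lemma coprime_rp (k : ℕ) {m : ℕ} (hm : m ≠ 0) : Nat.Coprime (rp k m) (Dk k) := by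
  by_contra hc
  obtain ⟨q, hq, hqr, hqD⟩ := Nat.Prime.not_coprime_iff_dvd.mp hc
  have hD : Dk k ≠ 0 := (Dk_pos k).ne'
  have hDs : Dk k ^ m ≠ 0 := pow_ne_zero _ hD
  have hfg : (sp k m).factorization = m.factorization ⊓ (Dk k ^ m).factorization :=
    Nat.factorization_gcd hm hDs
  have hq1 : 1 ≤ (Dk k).factorization q := hq.factorization_pos_of_dvd hD hqD
  have hsq : (sp k m).factorization q = m.factorization q := by
    rw [hfg]
    simp only [Finsupp.inf_apply, Nat.factorization_pow, Finsupp.smul_apply, smul_eq_mul]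
    exact min_eq_left (le_trans (Nat.factorization_lt q hm).le
      (le_trans (le_mul_of_one_le_right (Nat.zero_le m) hq1) (le_refl _)))
  have hrfact : (rp k m).factorization q = 0 := by
    rw [rp, Nat.factorization_div (sp_dvd k m)]
    simp [hsq]
  have hrp0 : rp k m ≠ 0 := (rp_pos k hm).ne'
  have := hq.factorization_pos_of_dvd hrp0 hqr
  omega

lemma sp_of_smooth {k : ℕ} (hk : 1 ≤ k) {s : ℕ} (hs : s ≠ 0) (h : SmoothNat k s) :
    sp k s = s :=
  Nat.gcd_eq_left (smooth_dvd_pow hk hs h)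

lemma sp_of_coprime (k : ℕ) {t : ℕ} (ht : Nat.Coprime t (Dk k)) : sp k t = 1 :=
  Nat.Coprime.pow_right _ ht

lemma sp_mul {k : ℕ} (hk : 1 ≤ k) {s t : ℕ} (hs0 : s ≠ 0) (hs : SmoothNat k s)
    (ht0 : t ≠ 0) (ht : Nat.Coprime t (Dk k)) : sp k (s * t) = s := by
  have hst : s * t ≠ 0 := mul_ne_zero hs0 ht0
  have h2 : (s * t).gcd (Dk k ^ (s * t)) = s.gcd (Dk k ^ (s * t)) := by
    rw [mul_comm s t]
    exact Nat.Coprime.gcd_mul_left_cancel s (ht.pow_right _)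
  have h3 : s ∣ Dk k ^ (s * t) := (smooth_dvd_pow hk hs0 hs).trans
    (pow_dvd_pow _ (Nat.le_mul_of_pos_right s (Nat.pos_of_ne_zero ht0)))
  rw [sp, h2, Nat.gcd_eq_left h3]

lemma rp_mul {k : ℕ} (hk : 1 ≤ k) {s t : ℕ} (hs0 : s ≠ 0) (hs : SmoothNat k s)
    (ht0 : t ≠ 0) (ht : Nat.Coprime t (Dk k)) : rp k (s * t) = t := by
  rw [rp, sp_mul hk hs0 hs ht0 ht, Nat.mul_div_cancel_left t (Nat.pos_of_ne_zero hs0)]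

lemma rp_of_coprime {k : ℕ} (hk : 1 ≤ k) {t : ℕ} (ht0 : t ≠ 0) (ht : Nat.Coprime t (Dk k)) :
    rp k t = t := by
  have := rp_mul hk (k := k) one_ne_zero (fun q hq h => absurd (Nat.eq_one_of_dvd_one h) hq.ne_one)
    ht0 ht
  rwa [one_mul] at this

/-- The key relation: for nonzero `a b`, the `KCore` forbidden relation holds iff
`a` and `b` have the same rough part and the smooth part of `a` divides that of `b`. -/
lemma kcore_rel_iff {k : ℕ} (hk : 1 ≤ k) {a b : ℕ} (ha : a ≠ 0) (hb : b ≠ 0) :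
    (a ∣ b ∧ SmoothNat k (b / a)) ↔ (rp k a = rp k b ∧ sp k a ∣ sp k b) := by
  constructor
  · rintro ⟨hab, hq⟩
    set q := b / a with hqdef
    have hbq : b = (sp k a * q) * rp k a := by
      calc b = a * q := (Nat.mul_div_cancel' hab).symm
        _ = (sp k a * rp k a) * q := by rw [sp_mul_rp]
        _ = (sp k a * q) * rp k a := by ring
    have hq0 : q ≠ 0 := by
      intro h; rw [h, mul_zero, zero_mul] at hbq; exact hb hbq
    have hsq : SmoothNat k (sp k a * q) := smoothNat_mul (smooth_sp k a) hq
    have hsq0 : sp k a * q ≠ 0 := mul_ne_zero (sp_pos k ha).ne' hq0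
    have hra0 : rp k a ≠ 0 := (rp_pos k ha).ne'
    have hrac : Nat.Coprime (rp k a) (Dk k) := coprime_rp k ha
    constructor
    · rw [hbq, rp_mul hk hsq0 hsq hra0 hrac]
    · rw [hbq, sp_mul hk hsq0 hsq hra0 hrac]
      exact Dvd.intro _ rfl
  · rintro ⟨hr, ⟨d, hd⟩⟩
    have hba : b = a * d := by
      calc b = sp k b * rp k b := (sp_mul_rp k b).symm
        _ = (sp k a * rp k a) * d := by rw [hd, ← hr]; ring
        _ = a * d := by rw [sp_mul_rp]
    have hab : a ∣ b := ⟨d, hba⟩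
    have hdvd : b / a = d := by rw [hba, Nat.mul_div_cancel_left d (Nat.pos_of_ne_zero ha)]
    refine ⟨hab, ?_⟩
    rw [hdvd]
    exact smoothNat_of_dvd ⟨sp k a, by rw [hd]; ring⟩ (smooth_sp k b)

/-! ### Part 3: the product identity -/

/-- Counting subsets satisfying blockwise constraints. -/
lemma card_powerset_filter_blocks (Q : ℕ → Finset ℕ → Prop) (A : ℕ → Finset ℕ) :
    ∀ (B : Finset ℕ), (∀ t ∈ B, ∀ u ∈ B, t ≠ u → Disjoint (A t) (A u)) →
    ((B.biUnion A).powerset.filter (fun S => ∀ t ∈ B, Q t (S ∩ A t))).card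
      = ∏ t ∈ B, ((A t).powerset.filter (Q t)).card := by
  intro B
  induction B using Finset.induction_on with
  | empty => intro _; simp
  | @insert a B' ha ih =>
    intro hdisj
    have hdB' : ∀ t ∈ B', ∀ u ∈ B', t ≠ u → Disjoint (A t) (A u) := fun t ht u hu htu =>
      hdisj t (Finset.mem_insert_of_mem ht) u (Finset.mem_insert_of_mem hu) htu
    have hdaU : ∀ u ∈ B', Disjoint (A a) (A u) := fun u hu =>
      hdisj a (Finset.mem_insert_self a B') u (Finset.mem_insert_of_mem hu)
        (fun h => ha (h ▸ hu))
    set U := B'.biUnion A with hU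
    have hAU : ∀ t ∈ B', A t ⊆ U := fun t ht => Finset.subset_biUnion_of_mem A ht
    have hdisjaU : Disjoint (A a) U := by
      rw [hU, Finset.disjoint_biUnion_right]
      exact hdaU
    rw [Finset.biUnion_insert, Finset.prod_insert ha, ← ih hdB']
    rw [← Finset.card_product]
    apply Finset.card_bij'
      (i := fun S _ => (S ∩ A a, S ∩ U))
      (j := fun T _ => T.1 ∪ T.2)
    · -- hi
      intro S hS
      simp only [Finset.mem_filter, Finset.mem_powerset, Finset.forall_mem_insert] at hS
      obtain ⟨hSsub, hQa, hQB⟩ := hS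
      simp only [Finset.mem_product, Finset.mem_filter, Finset.mem_powerset]
      refine ⟨⟨Finset.inter_subset_right, hQa⟩, Finset.inter_subset_right, ?_⟩
      intro t ht
      have : S ∩ U ∩ A t = S ∩ A t := by
        rw [Finset.inter_assoc, Finset.inter_eq_right.mpr (hAU t ht)]
      rw [this]
      exact hQB t ht
    · -- hj
      rintro ⟨T₁, T₂⟩ hT
      simp only [Finset.mem_product, Finset.mem_filter, Finset.mem_powerset] at hT
      obtain ⟨⟨hT1, hQ1⟩, hT2, hQ2⟩ := hT
      simp only [Finset.mem_filter, Finset.mem_powerset, Finset.forall_mem_insert]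
      refine ⟨Finset.union_subset_union hT1 hT2, ?_, ?_⟩
      · have : (T₁ ∪ T₂) ∩ A a = T₁ := by
          rw [Finset.union_inter_distrib_right, Finset.inter_eq_left.mpr hT1,
            Finset.disjoint_iff_inter_eq_empty.mp (Finset.disjoint_of_subset_left hT2 hdisjaU.symm), Finset.union_empty]
        rw [this]; exact hQ1
      · intro t ht
        have : (T₁ ∪ T₂) ∩ A t = T₂ ∩ A t := by
          rw [Finset.union_inter_distrib_right,
            Finset.disjoint_iff_inter_eq_empty.mp (Finset.disjoint_of_subset_left hT1 (hdaU t ht)), Finset.empty_union]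
        rw [this]; exact hQ2 t ht
    · -- left inverse
      intro S hS
      simp only [Finset.mem_filter, Finset.mem_powerset] at hS
      rw [← Finset.inter_union_distrib_left, Finset.inter_eq_left.mpr hS.1]
    · -- right inverse
      rintro ⟨T₁, T₂⟩ hT
      simp only [Finset.mem_product, Finset.mem_filter, Finset.mem_powerset] at hT
      obtain ⟨⟨hT1, _⟩, hT2, _⟩ := hT
      have e1 : (T₁ ∪ T₂) ∩ A a = T₁ := by
        rw [Finset.union_inter_distrib_right, Finset.inter_eq_left.mpr hT1,
          Finset.disjoint_iff_inter_eq_empty.mp (Finset.disjoint_of_subset_left hT2 hdisjaU.symm), Finset.union_empty]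
      have e2 : (T₁ ∪ T₂) ∩ U = T₂ := by
        rw [Finset.union_inter_distrib_right, Finset.inter_eq_left.mpr hT2,
          Finset.disjoint_iff_inter_eq_empty.mp (Finset.disjoint_of_subset_left hT1 hdisjaU), Finset.empty_union]
      simp [e1, e2]

noncomputable def Tn (k n : ℕ) : Finset ℕ :=
  (Finset.Icc 1 n).filter (fun t => Nat.Coprime t (Dk k))

noncomputable def Ablock (k n t : ℕ) : Finset ℕ :=
  (Finset.Icc 1 n).filter (fun m => rp k m = t)

lemma Icc_eq_biUnion_Ablock {k : ℕ} (hk : 1 ≤ k) (n : ℕ) :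
    Finset.Icc 1 n = (Tn k n).biUnion (Ablock k n) := by
  ext m
  simp only [Finset.mem_biUnion, Tn, Ablock, Finset.mem_filter, Finset.mem_Icc]
  constructor
  · intro hm
    have hm0 : m ≠ 0 := by omega
    refine ⟨rp k m, ⟨⟨rp_pos k hm0, le_trans (Nat.le_of_dvd (by omega) (rp_dvd k m)) hm.2⟩,
      coprime_rp k hm0⟩, ⟨hm, rfl⟩⟩
  · rintro ⟨t, _, hm, _⟩
    exact hm

lemma Ablock_disjoint (k n : ℕ) : ∀ t ∈ Tn k n, ∀ u ∈ Tn k n, t ≠ u →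
    Disjoint (Ablock k n t) (Ablock k n u) := by
  intro t _ u _ htu
  rw [Finset.disjoint_left]
  intro m hmt hmu
  simp only [Ablock, Finset.mem_filter] at hmt hmu
  exact htu (hmt.2 ▸ hmu.2 ▸ rfl)

lemma mem_inter_Ablock {k n t x : ℕ} {S : Finset ℕ} (hx : x ∈ S ∩ Ablock k n t) :
    x ∈ S ∧ (1 ≤ x ∧ x ≤ n) ∧ rp k x = t := by
  have h1 := Finset.mem_inter.mp hx
  have h2 := Finset.mem_filter.mp h1.2
  exact ⟨h1.1, Finset.mem_Icc.mp h2.1, h2.2⟩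

lemma kcore_iff_blocks {k : ℕ} (hk : 1 ≤ k) {n : ℕ} {S : Finset ℕ}
    (hS : S ⊆ Finset.Icc 1 n) :
    KCore k S ↔ ∀ t ∈ Tn k n, Primitive (S ∩ Ablock k n t) := by
  constructor
  · intro hK t _ a haS b hbS hab hdvd
    obtain ⟨haS1, haI, har⟩ := mem_inter_Ablock haS
    obtain ⟨hbS1, hbI, hbr⟩ := mem_inter_Ablock hbS
    have ha0 : a ≠ 0 := by omega
    have hb0 : b ≠ 0 := by omega
    have hrr : rp k a = rp k b := har.trans hbr.symm
    have hspd : sp k a ∣ sp k b := by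
      have h1 : sp k a * rp k a ∣ sp k b * rp k a := by
        rw [sp_mul_rp k a, hrr, sp_mul_rp k b]
        exact hdvd
      exact (mul_dvd_mul_iff_right (rp_pos k ha0).ne').mp h1
    exact hK a haS1 b hbS1 hab ((kcore_rel_iff hk ha0 hb0).mpr ⟨hrr, hspd⟩)
  · intro hP a haS b hbS hab hrel
    have haI := Finset.mem_Icc.mp (hS haS)
    have hbI := Finset.mem_Icc.mp (hS hbS)
    have ha0 : a ≠ 0 := by omega
    have hb0 : b ≠ 0 := by omega
    obtain ⟨hr, _⟩ := (kcore_rel_iff hk ha0 hb0).mp hrel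
    have htmem : rp k a ∈ Tn k n := by
      refine Finset.mem_filter.mpr ⟨Finset.mem_Icc.mpr
        ⟨rp_pos k ha0, le_trans (Nat.le_of_dvd (by omega) (rp_dvd k a)) haI.2⟩,
        coprime_rp k ha0⟩
    refine hP (rp k a) htmem a ?_ b ?_ hab hrel.1
    · exact Finset.mem_inter.mpr ⟨haS,
        Finset.mem_filter.mpr ⟨Finset.mem_Icc.mpr haI, rfl⟩⟩
    · exact Finset.mem_inter.mpr ⟨hbS,
        Finset.mem_filter.mpr ⟨Finset.mem_Icc.mpr hbI, hr.symm⟩⟩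

lemma card_primitive_image_mul {t : ℕ} (ht : 0 < t) (G : Finset ℕ) :
    (((G.image (fun s => s * t)).powerset.filter Primitive)).card
      = (G.powerset.filter Primitive).card := by
  refine Finset.card_bij' (fun S _ => S.image (fun m => m / t))
    (fun S _ => S.image (fun s => s * t)) ?hi ?hj ?li ?ri
  case hi =>
    intro S hS
    obtain ⟨hSsub, hSprim⟩ := Finset.mem_filter.mp hS
    rw [Finset.mem_powerset] at hSsub
    refine Finset.mem_filter.mpr ⟨Finset.mem_powerset.mpr ?_, ?_⟩
    · intro x hx
      obtain ⟨m, hm, hxm⟩ := Finset.mem_image.mp hx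
      obtain ⟨s, hs, hsm⟩ := Finset.mem_image.mp (hSsub hm)
      rw [← hxm, ← hsm, Nat.mul_div_cancel s ht]
      exact hs
    · intro x hx y hy hxy hdvd
      obtain ⟨mx, hmx, hx'⟩ := Finset.mem_image.mp hx
      obtain ⟨my, hmy, hy'⟩ := Finset.mem_image.mp hy
      obtain ⟨sx, _, hsx⟩ := Finset.mem_image.mp (hSsub hmx)
      obtain ⟨sy, _, hsy⟩ := Finset.mem_image.mp (hSsub hmy)
      have hxx : x * t = mx := by rw [← hx', ← hsx, Nat.mul_div_cancel sx ht]
      have hyy : y * t = my := by rw [← hy', ← hsy, Nat.mul_div_cancel sy ht]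
      refine hSprim mx hmx my hmy ?_ ?_
      · intro h
        rw [← hxx, ← hyy] at h
        exact hxy (Nat.eq_of_mul_eq_mul_right ht h)
      · rw [← hxx, ← hyy]
        exact mul_dvd_mul_right hdvd t
  case hj =>
    intro S hS
    obtain ⟨hSsub, hSprim⟩ := Finset.mem_filter.mp hS
    rw [Finset.mem_powerset] at hSsub
    refine Finset.mem_filter.mpr ⟨Finset.mem_powerset.mpr (Finset.image_subset_image hSsub), ?_⟩
    intro x hx y hy hxy hdvd
    obtain ⟨sx, hsx, hx'⟩ := Finset.mem_image.mp hx
    obtain ⟨sy, hsy, hy'⟩ := Finset.mem_image.mp hy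
    refine hSprim sx hsx sy hsy ?_ ?_
    · intro h
      apply hxy
      rw [← hx', ← hy', h]
    · rw [← hx', ← hy'] at hdvd
      exact (mul_dvd_mul_iff_right ht.ne').mp hdvd
  case li =>
    intro S hS
    obtain ⟨hSsub, _⟩ := Finset.mem_filter.mp hS
    rw [Finset.mem_powerset] at hSsub
    show (S.image (fun m => m / t)).image (fun s => s * t) = S
    rw [Finset.image_image]
    have : ∀ x ∈ S, (fun s => s * t) ((fun m => m / t) x) = id x := by
      intro x hx
      obtain ⟨s, _, hsm⟩ := Finset.mem_image.mp (hSsub hx)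
      simp only [Function.comp, id]
      rw [← hsm, Nat.mul_div_cancel s ht]
    have h2 : Finset.image ((fun s => s * t) ∘ fun m => m / t) S = Finset.image id S :=
      Finset.image_congr (fun x hx => this x hx)
    rw [h2, Finset.image_id]
  case ri =>
    intro S hS
    show (S.image (fun s => s * t)).image (fun m => m / t) = S
    rw [Finset.image_image]
    have : ∀ x ∈ S, (fun m => m / t) ((fun s => s * t) x) = id x := by
      intro x _
      simp only [Function.comp, id]
      exact Nat.mul_div_cancel x ht
    have h2 : Finset.image ((fun m => m / t) ∘ fun s => s * t) S = Finset.image id S :=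
      Finset.image_congr (fun x hx => this x hx)
    rw [h2, Finset.image_id]

lemma Ablock_eq_image {k : ℕ} (hk : 1 ≤ k) {n t : ℕ} (ht : t ∈ Tn k n) :
    Ablock k n t = ((Finset.Icc 1 (n / t)).filter (SmoothNat k)).image (fun s => s * t) := by
  obtain ⟨htI, htc⟩ := Finset.mem_filter.mp ht
  obtain ⟨ht1, htn⟩ := Finset.mem_Icc.mp htI
  have ht0 : t ≠ 0 := by omega
  ext m
  simp only [Ablock, Finset.mem_filter, Finset.mem_Icc, Finset.mem_image]
  constructor
  · rintro ⟨⟨hm1, hmn⟩, hmr⟩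
    have hm0 : m ≠ 0 := by omega
    refine ⟨sp k m, ⟨⟨sp_pos k hm0, ?_⟩, smooth_sp k m⟩, by rw [← hmr]; exact sp_mul_rp k m⟩
    rw [Nat.le_div_iff_mul_le (Nat.pos_of_ne_zero ht0)]
    calc sp k m * t = sp k m * rp k m := by rw [hmr]
      _ = m := sp_mul_rp k m
      _ ≤ n := hmn
  · rintro ⟨s, ⟨⟨hs1, hsd⟩, hsm⟩, rfl⟩
    have hs0 : s ≠ 0 := by omega
    refine ⟨⟨Nat.one_le_iff_ne_zero.mpr (mul_ne_zero hs0 ht0), ?_⟩,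
      rp_mul hk hs0 hsm ht0 htc⟩
    calc s * t ≤ (n / t) * t := Nat.mul_le_mul_right t hsd
      _ ≤ n := Nat.div_mul_le_self n t

lemma card_Ablock_primitive {k : ℕ} (hk : 1 ≤ k) {n t : ℕ} (ht : t ∈ Tn k n) :
    ((Ablock k n t).powerset.filter Primitive).card = Pk k (n / t) := by
  obtain ⟨htI, _⟩ := Finset.mem_filter.mp ht
  obtain ⟨ht1, _⟩ := Finset.mem_Icc.mp htI
  rw [Ablock_eq_image hk ht, card_primitive_image_mul (by omega)]
  rfl

/-- The product identity: `fk n k = ∏_{t ≤ n rough} Pk k (n / t)`. -/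
lemma fk_eq_prod {k : ℕ} (hk : 1 ≤ k) (n : ℕ) :
    fk n k = ∏ t ∈ Tn k n, Pk k (n / t) := by
  rw [fk]
  have h1 : (Finset.Icc 1 n).powerset.filter (KCore k)
      = (Finset.Icc 1 n).powerset.filter
        (fun S => ∀ t ∈ Tn k n, Primitive (S ∩ Ablock k n t)) := by
    apply Finset.filter_congr
    intro S hS
    exact kcore_iff_blocks hk (Finset.mem_powerset.mp hS)
  rw [h1, Icc_eq_biUnion_Ablock hk n,
    card_powerset_filter_blocks (fun _ => Primitive) (Ablock k n) (Tn k n)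
      (Ablock_disjoint k n)]
  exact Finset.prod_congr rfl fun t ht => card_Ablock_primitive hk ht

/-! ### Part 4: analytic bounds -/

noncomputable def Psi (k x : ℕ) : ℕ := ((Finset.Icc 1 x).filter (SmoothNat k)).card

lemma one_le_Pk (k x : ℕ) : 1 ≤ Pk k x := by
  rw [Pk, Nat.one_le_iff_ne_zero, ← Nat.pos_iff_ne_zero, Finset.card_pos]
  exact ⟨∅, Finset.mem_filter.mpr ⟨Finset.empty_mem_powerset _,
    fun a ha => absurd ha (Finset.notMem_empty a)⟩⟩

lemma Pk_le_pow (k x : ℕ) : Pk k x ≤ 2 ^ Psi k x := by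
  rw [Pk, Psi, ← Finset.card_powerset]
  exact Finset.card_filter_le _ _

lemma Psi_le {k x : ℕ} (hk : 1 ≤ k) (hx : x ≠ 0) :
    Psi k x ≤ (Nat.log 2 x + 1) ^ k := by
  classical
  set E := Nat.log 2 x with hE
  have hfac : ∀ m ∈ (Finset.Icc 1 x).filter (SmoothNat k), ∀ p : ℕ,
      m.factorization p ≤ E := by
    intro m hm p
    obtain ⟨hmI, _⟩ := Finset.mem_filter.mp hm
    obtain ⟨hm1, hmx⟩ := Finset.mem_Icc.mp hmI
    rcases Nat.eq_zero_or_pos (m.factorization p) with h0 | hpos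
    · omega
    · have hp : p.Prime := by
        by_contra hnp
        rw [Nat.factorization_eq_zero_of_not_prime m hnp] at hpos
        omega
      have h1 : p ^ m.factorization p ∣ m := Nat.ordProj_dvd m p
      have h2 : 2 ^ m.factorization p ≤ p ^ m.factorization p :=
        Nat.pow_le_pow_left hp.two_le _
      have h3 : p ^ m.factorization p ≤ m := Nat.le_of_dvd (by omega) h1
      have h4 : 2 ^ m.factorization p ≤ x := le_trans (le_trans h2 h3) hmx
      exact (Nat.le_log_iff_pow_le one_lt_two hx).mpr h4
  have key : Psi k x ≤ Fintype.card (Fin k → Fin (E + 1)) := by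
    rw [← Finset.card_univ]
    apply Finset.card_le_card_of_injOn
      (fun m => fun i : Fin k => (⟨min (m.factorization (Nat.nth Nat.Prime i)) E,
        by omega⟩ : Fin (E+1)))
    · intro m _
      exact Finset.mem_univ _
    · intro m hm m' hm' heq
      rw [Finset.mem_coe] at hm hm'
      have hm0 : m ≠ 0 := by
        have := (Finset.mem_Icc.mp (Finset.mem_filter.mp hm).1).1; omega
      have hm'0 : m' ≠ 0 := by
        have := (Finset.mem_Icc.mp (Finset.mem_filter.mp hm').1).1; omega
      have hsm : SmoothNat k m := (Finset.mem_filter.mp hm).2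
      have hsm' : SmoothNat k m' := (Finset.mem_filter.mp hm').2
      apply Nat.factorization_inj hm0 hm'0
      ext p
      by_cases hp : p.Prime
      · by_cases hpk : p ≤ Nat.nth Nat.Prime (k - 1)
        · have hcount : Nat.nth Nat.Prime (Nat.count Nat.Prime p) = p := Nat.nth_count hp
          have hik : Nat.count Nat.Prime p < k := by
            have h5 : Nat.count Nat.Prime p ≤ k - 1 :=
              (Nat.nth_le_nth Nat.infinite_setOf_prime).mp (by rw [hcount]; exact hpk)
            omega
          have happ := congrArg Fin.val (congrFun heq ⟨Nat.count Nat.Prime p, hik⟩)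
          simp only [hcount] at happ
          rw [min_eq_left (hfac m hm p), min_eq_left (hfac m' hm' p)] at happ
          exact happ
        · rw [Nat.factorization_eq_zero_of_not_dvd (fun hd => hpk (hsm p hp hd)),
            Nat.factorization_eq_zero_of_not_dvd (fun hd => hpk (hsm' p hp hd))]
      · rw [Nat.factorization_eq_zero_of_not_prime m hp,
          Nat.factorization_eq_zero_of_not_prime m' hp]
  calc Psi k x ≤ _ := key
    _ = (Nat.log 2 x + 1) ^ k := by rw [Fintype.card_fun]; simp [hE]

noncomputable def Kc (k : ℕ) : ℝ := (2*k/Real.log 2 + 1)^k * Real.log 2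

lemma Kc_pos (k : ℕ) : 0 < Kc k := by
  have h2 : (0:ℝ) < Real.log 2 := Real.log_pos one_lt_two
  rw [Kc]
  have : (0:ℝ) < 2*k/Real.log 2 + 1 := by positivity
  positivity

lemma log_Pk_le {k l : ℕ} (hk : 1 ≤ k) (hl : 1 ≤ l) :
    Real.log (Pk k l) ≤ Kc k * Real.sqrt l := by
  have hlog2 : (0:ℝ) < Real.log 2 := Real.log_pos one_lt_two
  have hl0 : (0:ℝ) < l := by exact_mod_cast hl
  have hx1 : (1:ℝ) ≤ l := by exact_mod_cast hl
  set α : ℝ := 1/(2*(k:ℝ)) with hα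
  have hk0 : (0:ℝ) < k := by exact_mod_cast hk
  have hαpos : 0 < α := by rw [hα]; positivity
  have hrpos : (0:ℝ) < (l:ℝ) ^ α := Real.rpow_pos_of_pos hl0 α
  have hr1 : (1:ℝ) ≤ (l:ℝ) ^ α := Real.one_le_rpow hx1 hαpos.le
  set c : ℝ := 2*k/Real.log 2 + 1 with hc
  have hcpos : 0 < c := by rw [hc]; positivity
  -- Step 1: log Pk ≤ Psi * log 2
  have h1 : Real.log (Pk k l) ≤ (Psi k l : ℝ) * Real.log 2 := by
    have hple : ((Pk k l : ℕ) : ℝ) ≤ ((2:ℝ)) ^ (Psi k l) := by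
      have := Pk_le_pow k l
      calc ((Pk k l : ℕ) : ℝ) ≤ ((2 ^ Psi k l : ℕ) : ℝ) := by exact_mod_cast this
        _ = (2:ℝ) ^ Psi k l := by push_cast; ring
    calc Real.log (Pk k l) ≤ Real.log ((2:ℝ) ^ Psi k l) :=
          Real.log_le_log (by exact_mod_cast one_le_Pk k l) hple
      _ = (Psi k l : ℝ) * Real.log 2 := Real.log_pow 2 (Psi k l)
  -- Step 2: Psi ≤ (Nat.log 2 l + 1)^k ≤ c^k * sqrt l
  have h2 : (Psi k l : ℝ) ≤ ((Nat.log 2 l : ℝ) + 1) ^ k := by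
    have := Psi_le hk (show l ≠ 0 by omega)
    calc (Psi k l : ℝ) ≤ (((Nat.log 2 l + 1) ^ k : ℕ) : ℝ) := by exact_mod_cast this
      _ = ((Nat.log 2 l : ℝ) + 1) ^ k := by push_cast; ring
  have hlog : (Nat.log 2 l : ℝ) * Real.log 2 ≤ Real.log l := by
    have hpow : ((2:ℕ) ^ Nat.log 2 l : ℕ) ≤ l := Nat.pow_log_le_self 2 (by omega)
    have hpowR : ((2:ℝ)) ^ (Nat.log 2 l) ≤ (l:ℝ) := by exact_mod_cast hpow
    calc (Nat.log 2 l : ℝ) * Real.log 2 = Real.log ((2:ℝ) ^ Nat.log 2 l) :=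
          (Real.log_pow 2 (Nat.log 2 l)).symm
      _ ≤ Real.log l := Real.log_le_log (by positivity) hpowR
  have hloglel : Real.log l ≤ 2*(k:ℝ) * (l:ℝ) ^ α := by
    have e1 : Real.log ((l:ℝ) ^ α) = α * Real.log l := Real.log_rpow hl0 α
    have e2 : Real.log ((l:ℝ) ^ α) ≤ (l:ℝ) ^ α :=
      le_trans (Real.log_le_sub_one_of_pos hrpos) (by linarith)
    have e3 : Real.log l = 2*(k:ℝ) * Real.log ((l:ℝ) ^ α) := by
      rw [e1, hα]; field_simp
    rw [e3]
    have : (0:ℝ) ≤ 2*(k:ℝ) := by positivity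
    nlinarith
  have h3 : (Nat.log 2 l : ℝ) + 1 ≤ c * (l:ℝ) ^ α := by
    have hd : (Nat.log 2 l : ℝ) ≤ Real.log l / Real.log 2 := by
      rw [le_div_iff₀ hlog2]; exact hlog
    have hd2 : Real.log l / Real.log 2 ≤ 2*(k:ℝ) * (l:ℝ) ^ α / Real.log 2 := by
      gcongr
    calc (Nat.log 2 l : ℝ) + 1 ≤ 2*(k:ℝ) * (l:ℝ) ^ α / Real.log 2 + 1 := by linarith
      _ ≤ 2*(k:ℝ) * (l:ℝ) ^ α / Real.log 2 + (l:ℝ)^α := by linarith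
      _ = c * (l:ℝ) ^ α := by rw [hc]; field_simp
  have h4 : ((Nat.log 2 l : ℝ) + 1) ^ k ≤ c^k * Real.sqrt l := by
    have hnn : (0:ℝ) ≤ (Nat.log 2 l : ℝ) + 1 := by positivity
    have := pow_le_pow_left₀ hnn h3 k
    calc ((Nat.log 2 l : ℝ) + 1) ^ k ≤ (c * (l:ℝ) ^ α) ^ k := this
      _ = c^k * ((l:ℝ) ^ α) ^ k := mul_pow c _ k
      _ = c^k * Real.sqrt l := by
          congr 1
          rw [← Real.rpow_natCast ((l:ℝ)^α) k, ← Real.rpow_mul hl0.le]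
          rw [Real.sqrt_eq_rpow]
          congr 1
          rw [hα]
          field_simp
  -- combine
  have hΨ : (Psi k l : ℝ) * Real.log 2 ≤ (c^k * Real.sqrt l) * Real.log 2 :=
    mul_le_mul_of_nonneg_right (h2.trans h4) hlog2.le
  calc Real.log (Pk k l) ≤ (Psi k l : ℝ) * Real.log 2 := h1
    _ ≤ (c^k * Real.sqrt l) * Real.log 2 := hΨ
    _ = Kc k * Real.sqrt l := by rw [Kc, hc]; ring

lemma sum_inv_sqrt (M : ℕ) :
    ∑ t ∈ Finset.Icc 1 M, (1 / Real.sqrt t) ≤ 2 * Real.sqrt M := by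
  induction M with
  | zero => simp
  | succ M ih =>
    rw [Finset.sum_Icc_succ_top (by omega)]
    have hs : Real.sqrt M ≥ 0 := Real.sqrt_nonneg _
    have hu : Real.sqrt (M+1) > 0 := Real.sqrt_pos.mpr (by positivity)
    have hsq : (Real.sqrt M)^2 = (M:ℝ) := Real.sq_sqrt (by positivity)
    have husq : (Real.sqrt ((M:ℕ)+1:ℕ))^2 = ((M:ℝ)+1) := by
      push_cast
      exact Real.sq_sqrt (by positivity)
    have key : 1 / Real.sqrt ((M:ℕ)+1:ℕ) ≤ 2 * Real.sqrt ((M:ℕ)+1:ℕ) - 2 * Real.sqrt M := by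
      rw [div_le_iff₀ (by push_cast at husq ⊢; nlinarith [Real.sqrt_nonneg ((M:ℝ)+1)])]
      push_cast at husq ⊢
      nlinarith [sq_nonneg (Real.sqrt ((M:ℝ)+1) - Real.sqrt M), husq, hsq,
        Real.sqrt_nonneg ((M:ℝ)+1)]
    have hcast : ((M+1:ℕ):ℝ) = (M:ℝ)+1 := by push_cast; ring
    calc ∑ t ∈ Finset.Icc 1 M, (1 / Real.sqrt t) + 1 / Real.sqrt ((M+1:ℕ)) 
        ≤ 2 * Real.sqrt M + 1 / Real.sqrt ((M+1:ℕ)) := by linarith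
      _ ≤ 2 * Real.sqrt ((M+1:ℕ)) := by
          rw [hcast] at key ⊢
          push_cast at key ⊢
          linarith

/-! ### Part 5: counting coprime residues -/

noncomputable def Rc (k m : ℕ) : ℕ :=
  ((Finset.range m).filter (fun t => Nat.Coprime t (Dk k))).card

lemma Rc_split (k : ℕ) {a b : ℕ} (hab : a ≤ b) :
    Rc k b = Rc k a + ((Finset.Ico a b).filter (fun t => Nat.Coprime t (Dk k))).card := by
  rw [Rc, Rc, Finset.range_eq_Ico, Finset.range_eq_Ico,
    ← Finset.Ico_union_Ico_eq_Ico (Nat.zero_le a) hab, Finset.filter_union,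
    Finset.card_union_of_disjoint]
  exact Finset.disjoint_filter_filter (Finset.Ico_disjoint_Ico_consecutive 0 a b)

lemma Rc_block (k m : ℕ) : Rc k (m + Dk k) = Rc k m + (Dk k).totient := by
  rw [Rc_split k (Nat.le_add_right m (Dk k))]
  congr 1
  have : (Finset.Ico m (m + Dk k)).filter (fun t => Nat.Coprime t (Dk k))
      = (Finset.Ico m (m + Dk k)).filter (fun t => (Dk k).Coprime t) := by
    apply Finset.filter_congr
    intro t _
    simp [Nat.coprime_comm]
  rw [this, Nat.filter_coprime_Ico_eq_totient]

lemma Rc_le (k m : ℕ) : Rc k m ≤ m := by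
  calc Rc k m ≤ (Finset.range m).card := Finset.card_filter_le _ _
    _ = m := Finset.card_range m

lemma Rc_eq (k m : ℕ) : Rc k m = (m / Dk k) * (Dk k).totient + Rc k (m % Dk k) := by
  have key : ∀ q r : ℕ, Rc k (r + q * Dk k) = Rc k r + q * (Dk k).totient := by
    intro q
    induction q with
    | zero => simp
    | succ q ih =>
      intro r
      have : r + (q+1) * Dk k = (r + q * Dk k) + Dk k := by ring
      rw [this, Rc_block, ih r]
      ring
  have hm : m % Dk k + (m / Dk k) * Dk k = m := Nat.mod_add_div' m (Dk k)
  calc Rc k m = Rc k (m % Dk k + (m / Dk k) * Dk k) := by rw [hm]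
    _ = Rc k (m % Dk k) + (m / Dk k) * (Dk k).totient := key _ _
    _ = (m / Dk k) * (Dk k).totient + Rc k (m % Dk k) := by ring

lemma Rc_real_bound (k m : ℕ) :
    |(Rc k m : ℝ) - m * ((Dk k).totient : ℝ) / Dk k| ≤ Dk k := by
  have hDpos : 0 < Dk k := Dk_pos k
  have hD : (0:ℝ) < (Dk k : ℝ) := by exact_mod_cast hDpos
  set q := m / Dk k with hq
  set r := m % Dk k with hr
  have hmod : Dk k * q + r = m := Nat.div_add_mod m (Dk k)
  have hRc : Rc k m = q * (Dk k).totient + Rc k r := Rc_eq k m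
  have hrD : r < Dk k := Nat.mod_lt m hDpos
  have hRr : Rc k r ≤ r := Rc_le k r
  have hφD : (Dk k).totient ≤ Dk k := Nat.totient_le (Dk k)
  have hexpr : (Rc k m : ℝ) - m * ((Dk k).totient : ℝ) / Dk k
      = (Rc k r : ℝ) - r * ((Dk k).totient : ℝ) / Dk k := by
    have hmR : (m:ℝ) = (Dk k : ℝ) * q + r := by exact_mod_cast hmod.symm
    rw [hRc]
    push_cast
    rw [hmR]
    field_simp
    ring
  rw [hexpr]
  have hrR : (r:ℝ) < Dk k := by exact_mod_cast hrD
  have hRrR : (Rc k r : ℝ) ≤ r := by exact_mod_cast hRr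
  have hRr0 : (0:ℝ) ≤ (Rc k r : ℝ) := by positivity
  have hφDR : ((Dk k).totient : ℝ) ≤ Dk k := by exact_mod_cast hφD
  have hφ0 : (0:ℝ) ≤ ((Dk k).totient : ℝ) := by positivity
  have h1 : (0:ℝ) ≤ (r:ℝ) * ((Dk k).totient : ℝ) / Dk k := by positivity
  have h2 : (r:ℝ) * ((Dk k).totient : ℝ) / Dk k ≤ Dk k := by
    rw [div_le_iff₀ hD]
    nlinarith
  rw [abs_le]
  constructor <;> nlinarith

noncomputable def cfun (k n l : ℕ) : ℕ := ((Tn k n).filter (fun t => n / t = l)).card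

noncomputable def wt (k l : ℕ) : ℝ :=
  ((1:ℝ)/l - 1/(l+1)) * ((Dk k).totient : ℝ) / Dk k

lemma Tn_fiber_eq (k : ℕ) {n l : ℕ} (hl : 1 ≤ l) :
    (Tn k n).filter (fun t => n / t = l)
      = (Finset.Ico (n/(l+1)+1) (n/l+1)).filter (fun t => Nat.Coprime t (Dk k)) := by
  ext t
  simp only [Tn, Finset.mem_filter, Finset.mem_Icc, Finset.mem_Ico]
  constructor
  · rintro ⟨⟨⟨ht1, htn⟩, htc⟩, htl⟩
    have htpos : 0 < t := ht1
    have h1 : t ≤ n / l := by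
      rw [Nat.le_div_iff_mul_le hl]
      calc t * l = t * (n / t) := by rw [htl]
        _ ≤ n := by rw [mul_comm]; exact Nat.div_mul_le_self n t
    have h2 : n / (l+1) < t := by
      by_contra hc
      push_neg at hc
      have : t * (l+1) ≤ n := by
        rw [← Nat.le_div_iff_mul_le (by omega)]
        exact hc
      have : l + 1 ≤ n / t := by
        rw [Nat.le_div_iff_mul_le htpos, mul_comm]
        exact this
      omega
    exact ⟨⟨by omega, by omega⟩, htc⟩
  · rintro ⟨⟨hta, htb⟩, htc⟩
    have htpos : 0 < t := lt_of_lt_of_le (Nat.succ_pos _) hta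
    have htnl : t ≤ n / l := Nat.lt_succ_iff.mp htb
    have h1 : l ≤ n / t := by
      rw [Nat.le_div_iff_mul_le htpos, mul_comm]
      rw [Nat.le_div_iff_mul_le hl] at htnl
      exact htnl
    have h2 : n / t < l + 1 := by
      by_contra hc
      push_neg at hc
      have h3 : (l+1) * t ≤ n := by
        rw [← Nat.le_div_iff_mul_le htpos]
        exact hc
      have h4 : t ≤ n / (l+1) := by
        rw [Nat.le_div_iff_mul_le (by omega : 0 < l+1), mul_comm]
        exact h3
      omega
    have htn : t ≤ n := le_trans htnl (Nat.div_le_self n l)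
    exact ⟨⟨⟨by omega, htn⟩, htc⟩, by omega⟩

lemma cfun_eq (k : ℕ) {n l : ℕ} (hl : 1 ≤ l) :
    Rc k (n/(l+1)+1) + cfun k n l = Rc k (n/l+1) := by
  have hab : n/(l+1)+1 ≤ n/l+1 := by
    have h : n/(l+1) ≤ n/l := Nat.div_le_div_left (by omega) (by omega)
    omega
  rw [cfun, Tn_fiber_eq k hl, Rc_split k hab]

lemma cast_div_bounds {n l : ℕ} (hl : 0 < l) :
    ((n/l : ℕ):ℝ) ≤ (n:ℝ)/l ∧ (n:ℝ)/l < ((n/l:ℕ):ℝ) + 1 := by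
  have hlR : (0:ℝ) < (l:ℝ) := by exact_mod_cast hl
  constructor
  · exact Nat.cast_div_le
  · have hmod : l * (n / l) + n % l = n := Nat.div_add_mod n l
    have hmlt : n % l < l := Nat.mod_lt n hl
    have : (n:ℝ) = (l:ℝ) * ((n/l:ℕ):ℝ) + ((n % l : ℕ):ℝ) := by exact_mod_cast hmod.symm
    rw [this]
    rw [div_lt_iff₀ hlR]
    have : ((n % l : ℕ):ℝ) < (l:ℝ) := by exact_mod_cast hmlt
    nlinarith

set_option maxHeartbeats 1000000 in
lemma cfun_est (k : ℕ) {l : ℕ} (hl : 1 ≤ l) (n : ℕ) :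
    |(cfun k n l : ℝ) - n * wt k l| ≤ 2 * Dk k + 2 := by
  have hDpos : 0 < Dk k := Dk_pos k
  have hD : (0:ℝ) < (Dk k : ℝ) := by exact_mod_cast hDpos
  have hφ0 : (0:ℝ) ≤ ((Dk k).totient : ℝ) := by positivity
  have hφD : ((Dk k).totient : ℝ) ≤ Dk k := by exact_mod_cast Nat.totient_le (Dk k)
  have hr0 : 0 ≤ ((Dk k).totient : ℝ) / Dk k := by positivity
  have hr1 : ((Dk k).totient : ℝ) / Dk k ≤ 1 := by
    rw [div_le_one hD]; exact hφD
  have hlR : (0:ℝ) < (l:ℝ) := by exact_mod_cast hl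
  have hl1R : (0:ℝ) < (l:ℝ)+1 := by positivity
  obtain ⟨hb1, hb2⟩ := cast_div_bounds (n := n) (show 0 < l by omega)
  obtain ⟨ha1, ha2⟩ := cast_div_bounds (n := n) (show 0 < l+1 by omega)
  have hcast1 : ((l+1:ℕ):ℝ) = (l:ℝ)+1 := by push_cast; ring
  rw [hcast1] at ha1 ha2
  have hceq : (cfun k n l : ℝ) = (Rc k (n/l+1) : ℝ) - (Rc k (n/(l+1)+1) : ℝ) := by
    have h0 := cfun_eq k (n := n) hl
    have h1 : ((Rc k (n/(l+1)+1) : ℕ) : ℝ) + ((cfun k n l : ℕ) : ℝ) = (Rc k (n/l+1) : ℝ) := by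
      exact_mod_cast congrArg (fun x : ℕ => (x:ℝ)) h0
    linarith
  have hB := Rc_real_bound k (n/l+1)
  have hA := Rc_real_bound k (n/(l+1)+1)
  rw [abs_le] at hB hA
  push_cast at hB hA
  have hwt : (n:ℝ) * wt k l
      = ((n:ℝ)/l - (n:ℝ)/(l+1)) * (((Dk k).totient : ℝ) / Dk k) := by
    rw [wt]
    ring
  have hx1 : 0 ≤ (((n/l:ℕ):ℝ) + 1) - (n:ℝ)/l := by linarith
  have hx2 : (((n/l:ℕ):ℝ) + 1) - (n:ℝ)/l ≤ 1 := by linarith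
  have hy1 : 0 ≤ (((n/(l+1):ℕ):ℝ) + 1) - (n:ℝ)/(l+1) := by linarith
  have hy2 : (((n/(l+1):ℕ):ℝ) + 1) - (n:ℝ)/(l+1) ≤ 1 := by linarith
  simp only [mul_div_assoc] at hB hA
  have hp1 : 0 ≤ ((((n/l:ℕ):ℝ) + 1) - (n:ℝ)/l) * (((Dk k).totient : ℝ) / (Dk k:ℝ)) :=
    mul_nonneg hx1 hr0
  have hp2 : ((((n/l:ℕ):ℝ) + 1) - (n:ℝ)/l) * (((Dk k).totient : ℝ) / (Dk k:ℝ)) ≤ 1 :=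
    mul_le_one₀ hx2 hr0 hr1
  have hp3 : 0 ≤ ((((n/(l+1):ℕ):ℝ) + 1) - (n:ℝ)/(l+1)) * (((Dk k).totient : ℝ) / (Dk k:ℝ)) :=
    mul_nonneg hy1 hr0
  have hp4 : ((((n/(l+1):ℕ):ℝ) + 1) - (n:ℝ)/(l+1)) * (((Dk k).totient : ℝ) / (Dk k:ℝ)) ≤ 1 :=
    mul_le_one₀ hy2 hr0 hr1
  have hkey : (cfun k n l : ℝ) - n * wt k l
      = ((Rc k (n/l+1) : ℝ) - (((n/l:ℕ):ℝ)+1) * (((Dk k).totient : ℝ) / (Dk k:ℝ)))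
        - ((Rc k (n/(l+1)+1) : ℝ) - (((n/(l+1):ℕ):ℝ)+1) * (((Dk k).totient : ℝ) / (Dk k:ℝ)))
        + ((((n/l:ℕ):ℝ) + 1) - (n:ℝ)/l) * (((Dk k).totient : ℝ) / (Dk k:ℝ))
        - ((((n/(l+1):ℕ):ℝ) + 1) - (n:ℝ)/(l+1)) * (((Dk k).totient : ℝ) / (Dk k:ℝ)) := by
    rw [hceq, hwt]
    ring
  rw [abs_le]
  constructor
  · have h1 := hB.1
    have h2 := hA.2
    rw [hkey]
    linarith
  · rw [hkey]
    have h1 := hB.2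
    have h2 := hA.1
    linarith

lemma cfun_tendsto (k : ℕ) {l : ℕ} (hl : 1 ≤ l) :
    Tendsto (fun n : ℕ => (cfun k n l : ℝ) / n) atTop (nhds (wt k l)) := by
  rw [← tendsto_sub_nhds_zero_iff]
  apply squeeze_zero_norm' (a := fun n : ℕ => (2 * (Dk k : ℝ) + 2) / n)
  · filter_upwards [eventually_ge_atTop 1] with n hn
    have hnR : (0:ℝ) < (n:ℝ) := by exact_mod_cast hn
    have := cfun_est k hl n
    rw [Real.norm_eq_abs]
    have heq : (cfun k n l : ℝ) / n - wt k l = ((cfun k n l : ℝ) - n * wt k l) / n := by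
      field_simp
    rw [heq, abs_div, abs_of_pos hnR]
    exact (div_le_div_iff_of_pos_right hnR).mpr this
  · exact tendsto_const_div_atTop_nhds_zero_nat _

/-! ### Part 6: assembling the limit -/

noncomputable def aL (k l : ℕ) : ℝ := Real.log (Pk k l)

lemma aL_nonneg (k l : ℕ) : 0 ≤ aL k l :=
  Real.log_nonneg (by exact_mod_cast one_le_Pk k l)

lemma aL_le {k l : ℕ} (hk : 1 ≤ k) (hl : 1 ≤ l) : aL k l ≤ Kc k * Real.sqrt l :=
  log_Pk_le hk hl

noncomputable def gs (k l : ℕ) : ℝ := wt k (l+1) * aL k (l+1)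

lemma wt_nonneg (k : ℕ) {l : ℕ} (hl : 1 ≤ l) : 0 ≤ wt k l := by
  have hD : (0:ℝ) < (Dk k : ℝ) := by exact_mod_cast Dk_pos k
  have hlR : (0:ℝ) < (l:ℝ) := by exact_mod_cast hl
  have h1 : (1:ℝ)/((l:ℝ)+1) ≤ 1/l := by
    apply one_div_le_one_div_of_le hlR
    linarith
  rw [wt]
  have hφ : (0:ℝ) ≤ ((Dk k).totient : ℝ) := by positivity
  apply div_nonneg _ hD.le
  apply mul_nonneg _ hφ
  linarith

lemma wt_le_sq (k : ℕ) {l : ℕ} (hl : 1 ≤ l) : wt k l ≤ 1/(l:ℝ)^2 := by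
  have hD : (0:ℝ) < (Dk k : ℝ) := by exact_mod_cast Dk_pos k
  have hlR : (0:ℝ) < (l:ℝ) := by exact_mod_cast hl
  have hφD : ((Dk k).totient : ℝ) ≤ Dk k := by exact_mod_cast Nat.totient_le (Dk k)
  have hφ : (0:ℝ) ≤ ((Dk k).totient : ℝ) := by positivity
  have h1 : (1:ℝ)/l - 1/((l:ℝ)+1) = 1/((l:ℝ)*((l:ℝ)+1)) := by
    field_simp
    ring
  rw [wt, h1]
  have h2 : (1:ℝ)/((l:ℝ)*((l:ℝ)+1)) ≤ 1/(l:ℝ)^2 := by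
    apply one_div_le_one_div_of_le (by positivity)
    nlinarith
  have h3 : ((Dk k).totient : ℝ) / Dk k ≤ 1 := by
    rw [div_le_one hD]; exact hφD
  calc 1/((l:ℝ)*((l:ℝ)+1)) * ((Dk k).totient : ℝ) / Dk k
      = 1/((l:ℝ)*((l:ℝ)+1)) * (((Dk k).totient : ℝ) / Dk k) := by ring
    _ ≤ 1/((l:ℝ)*((l:ℝ)+1)) * 1 := by
        apply mul_le_mul_of_nonneg_left h3 (by positivity)
    _ = 1/((l:ℝ)*((l:ℝ)+1)) := mul_one _
    _ ≤ 1/(l:ℝ)^2 := h2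

lemma sqrt_div_sq {x : ℝ} (hx : 1 ≤ x) : Real.sqrt x / x^2 = 1 / x^((3:ℝ)/2) := by
  have hx0 : (0:ℝ) < x := by linarith
  have hs : Real.sqrt x * Real.sqrt x = x := Real.mul_self_sqrt hx0.le
  have hspos : 0 < Real.sqrt x := Real.sqrt_pos.mpr hx0
  have h32 : x^((3:ℝ)/2) = x * Real.sqrt x := by
    have : ((3:ℝ)/2) = 1 + 1/2 := by norm_num
    rw [this, Real.rpow_add hx0, Real.rpow_one]
    congr 1
    rw [Real.sqrt_eq_rpow]
  rw [h32]
  rw [div_eq_div_iff (by positivity) (by positivity)]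
  nlinarith

lemma gs_nonneg (k l : ℕ) : 0 ≤ gs k l :=
  mul_nonneg (wt_nonneg k (by omega)) (aL_nonneg k (l+1))

lemma gs_le {k : ℕ} (hk : 1 ≤ k) (l : ℕ) :
    gs k l ≤ Kc k * (1 / ((l+1:ℕ):ℝ)^((3:ℝ)/2)) := by
  have hl1 : (1:ℝ) ≤ ((l+1:ℕ):ℝ) := by exact_mod_cast Nat.le_add_left 1 l
  have hx0 : (0:ℝ) < ((l+1:ℕ):ℝ) := by linarith
  have h1 : gs k l ≤ (1/((l+1:ℕ):ℝ)^2) * (Kc k * Real.sqrt ((l+1:ℕ):ℝ)) := by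
    rw [gs]
    apply mul_le_mul (wt_le_sq k (by omega)) (aL_le hk (by omega)) (aL_nonneg k (l+1))
      (by positivity)
  calc gs k l ≤ (1/((l+1:ℕ):ℝ)^2) * (Kc k * Real.sqrt ((l+1:ℕ):ℝ)) := h1
    _ = Kc k * (Real.sqrt ((l+1:ℕ):ℝ) / ((l+1:ℕ):ℝ)^2) := by ring
    _ = Kc k * (1 / ((l+1:ℕ):ℝ)^((3:ℝ)/2)) := by rw [sqrt_div_sq hl1]

lemma gs_summable {k : ℕ} (hk : 1 ≤ k) : Summable (gs k) := by
  apply Summable.of_nonneg_of_le (gs_nonneg k) (gs_le hk)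
  apply Summable.mul_left
  have hbase : Summable (fun n : ℕ => 1 / (n:ℝ)^((3:ℝ)/2)) :=
    Real.summable_one_div_nat_rpow.mpr (by norm_num)
  exact (summable_nat_add_iff 1).mpr hbase

lemma sum_Icc_one (f : ℕ → ℝ) (L : ℕ) :
    ∑ l ∈ Finset.Icc 1 L, f l = ∑ i ∈ Finset.range L, f (i+1) := by
  induction L with
  | zero => simp
  | succ L ih => rw [Finset.sum_Icc_succ_top (by omega), ih, Finset.sum_range_succ]

lemma decomp {k : ℕ} (hk : 1 ≤ k) (L : ℕ) {n : ℕ} (hn : 1 ≤ n) :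
    (n:ℝ)⁻¹ * ∑ t ∈ Tn k n, aL k (n/t)
      = (∑ i ∈ Finset.range L, ((cfun k n (i+1):ℝ)/n) * aL k (i+1))
        + (n:ℝ)⁻¹ * ∑ t ∈ (Tn k n).filter (fun t => ¬ (n/t ≤ L)), aL k (n/t) := by
  have hsplit : ∑ t ∈ Tn k n, aL k (n/t)
      = ∑ t ∈ (Tn k n).filter (fun t => n/t ≤ L), aL k (n/t)
        + ∑ t ∈ (Tn k n).filter (fun t => ¬ (n/t ≤ L)), aL k (n/t) :=
    (Finset.sum_filter_add_sum_filter_not (Tn k n) _ _).symm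
  have hmaps : ∀ t ∈ (Tn k n).filter (fun t => n/t ≤ L), n/t ∈ Finset.Icc 1 L := by
    intro t ht
    obtain ⟨htT, htL⟩ := Finset.mem_filter.mp ht
    obtain ⟨htI, _⟩ := Finset.mem_filter.mp htT
    obtain ⟨ht1, htn⟩ := Finset.mem_Icc.mp htI
    exact Finset.mem_Icc.mpr ⟨(Nat.one_le_div_iff (by omega)).mpr htn, htL⟩
  have hfib := Finset.sum_fiberwise_of_maps_to hmaps (fun t => aL k (n/t))
  have hinner : ∀ l ∈ Finset.Icc 1 L,
      ∑ t ∈ ((Tn k n).filter (fun t => n/t ≤ L)).filter (fun t => n/t = l), aL k (n/t)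
        = (cfun k n l : ℝ) * aL k l := by
    intro l hl
    obtain ⟨hl1, hlL⟩ := Finset.mem_Icc.mp hl
    have hset : ((Tn k n).filter (fun t => n/t ≤ L)).filter (fun t => n/t = l)
        = (Tn k n).filter (fun t => n/t = l) := by
      rw [Finset.filter_filter]
      apply Finset.filter_congr
      intro t _
      constructor
      · rintro ⟨_, h⟩; exact h
      · intro h; exact ⟨by omega, h⟩
    rw [hset]
    have : ∀ t ∈ (Tn k n).filter (fun t => n/t = l), aL k (n/t) = aL k l := by
      intro t ht
      rw [(Finset.mem_filter.mp ht).2]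
    rw [Finset.sum_congr rfl this, Finset.sum_const, nsmul_eq_mul]
    rfl
  have hhead : ∑ t ∈ (Tn k n).filter (fun t => n/t ≤ L), aL k (n/t)
      = ∑ l ∈ Finset.Icc 1 L, (cfun k n l : ℝ) * aL k l := by
    rw [← hfib]
    exact Finset.sum_congr rfl hinner
  rw [hsplit, hhead, mul_add]
  congr 1
  rw [sum_Icc_one (fun l => (cfun k n l : ℝ) * aL k l) L, Finset.mul_sum]
  apply Finset.sum_congr rfl
  intro i _
  have hnR : ((n:ℝ)) ≠ 0 := by
    have : (0:ℝ) < n := by exact_mod_cast hn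
    linarith
  field_simp

lemma tail_nonneg (k L n : ℕ) :
    0 ≤ (n:ℝ)⁻¹ * ∑ t ∈ (Tn k n).filter (fun t => ¬ (n/t ≤ L)), aL k (n/t) := by
  apply mul_nonneg (by positivity)
  exact Finset.sum_nonneg fun t _ => aL_nonneg k (n/t)

lemma tail_bound {k : ℕ} (hk : 1 ≤ k) (L : ℕ) {n : ℕ} (hn : 1 ≤ n) :
    (n:ℝ)⁻¹ * ∑ t ∈ (Tn k n).filter (fun t => ¬ (n/t ≤ L)), aL k (n/t)
      ≤ 2 * Kc k / Real.sqrt (L+1) := by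
  have hKc := Kc_pos k
  have hnR : (0:ℝ) < n := by exact_mod_cast hn
  have hL1R : (0:ℝ) < ((L:ℝ)+1) := by positivity
  set Q := (Tn k n).filter (fun t => ¬ (n/t ≤ L)) with hQ
  set M := n/(L+1) with hM
  have hQsub : Q ⊆ Finset.Icc 1 M := by
    intro t ht
    obtain ⟨htT, htL⟩ := Finset.mem_filter.mp ht
    obtain ⟨htI, _⟩ := Finset.mem_filter.mp htT
    obtain ⟨ht1, htn⟩ := Finset.mem_Icc.mp htI
    push_neg at htL
    have h1 : L + 1 ≤ n / t := htL
    have h2 : (L+1) * t ≤ n := by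
      rw [← Nat.le_div_iff_mul_le (by omega : 0 < t)]
      exact h1
    have h3 : t ≤ M := by
      rw [hM, Nat.le_div_iff_mul_le (by omega : 0 < L+1), mul_comm]
      exact h2
    exact Finset.mem_Icc.mpr ⟨ht1, h3⟩
  have hterm : ∀ t ∈ Q, aL k (n/t) ≤ Kc k * (Real.sqrt n / Real.sqrt t) := by
    intro t ht
    obtain ⟨htT, htL⟩ := Finset.mem_filter.mp ht
    obtain ⟨htI, _⟩ := Finset.mem_filter.mp htT
    obtain ⟨ht1, htn⟩ := Finset.mem_Icc.mp htI
    have hdiv1 : 1 ≤ n / t := (Nat.one_le_div_iff (by omega)).mpr htn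
    have h1 : aL k (n/t) ≤ Kc k * Real.sqrt ((n/t : ℕ):ℝ) := aL_le hk hdiv1
    have h2 : Real.sqrt ((n/t : ℕ):ℝ) ≤ Real.sqrt ((n:ℝ)/t) :=
      Real.sqrt_le_sqrt Nat.cast_div_le
    have h3 : Real.sqrt ((n:ℝ)/t) = Real.sqrt n / Real.sqrt t :=
      Real.sqrt_div (by positivity) _
    calc aL k (n/t) ≤ Kc k * Real.sqrt ((n/t : ℕ):ℝ) := h1
      _ ≤ Kc k * Real.sqrt ((n:ℝ)/t) := by
          apply mul_le_mul_of_nonneg_left h2 hKc.le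
      _ = Kc k * (Real.sqrt n / Real.sqrt t) := by rw [h3]
  have hsum1 : ∑ t ∈ Q, aL k (n/t) ≤ ∑ t ∈ Q, Kc k * (Real.sqrt n / Real.sqrt t) :=
    Finset.sum_le_sum hterm
  have hsum2 : ∑ t ∈ Q, Kc k * (Real.sqrt n / Real.sqrt t)
      ≤ ∑ t ∈ Finset.Icc 1 M, Kc k * (Real.sqrt n / Real.sqrt t) := by
    apply Finset.sum_le_sum_of_subset_of_nonneg hQsub
    intro t _ _
    positivity
  have hsum3 : ∑ t ∈ Finset.Icc 1 M, Kc k * (Real.sqrt n / Real.sqrt t)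
      = (Kc k * Real.sqrt n) * ∑ t ∈ Finset.Icc 1 M, (1 / Real.sqrt t) := by
    rw [Finset.mul_sum]
    apply Finset.sum_congr rfl
    intro t _
    ring
  have hsum4 : ∑ t ∈ Finset.Icc 1 M, (1 / Real.sqrt t) ≤ 2 * Real.sqrt M :=
    sum_inv_sqrt M
  have hMle : Real.sqrt M ≤ Real.sqrt n / Real.sqrt ((L:ℝ)+1) := by
    have h1 : ((M:ℕ):ℝ) ≤ (n:ℝ)/((L:ℝ)+1) := by
      have := Nat.cast_div_le (α := ℝ) (m := n) (n := L+1)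
      calc ((M:ℕ):ℝ) = ((n/(L+1) : ℕ):ℝ) := by rw [hM]
        _ ≤ (n:ℝ)/((L+1:ℕ):ℝ) := this
        _ = (n:ℝ)/((L:ℝ)+1) := by push_cast; ring
    calc Real.sqrt M ≤ Real.sqrt ((n:ℝ)/((L:ℝ)+1)) := Real.sqrt_le_sqrt h1
      _ = Real.sqrt n / Real.sqrt ((L:ℝ)+1) := Real.sqrt_div (by positivity) _
  have htotal : ∑ t ∈ Q, aL k (n/t)
      ≤ (Kc k * Real.sqrt n) * (2 * (Real.sqrt n / Real.sqrt ((L:ℝ)+1))) := by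
    calc ∑ t ∈ Q, aL k (n/t) ≤ (Kc k * Real.sqrt n) * ∑ t ∈ Finset.Icc 1 M, (1 / Real.sqrt t) := by
          rw [← hsum3]; exact le_trans hsum1 hsum2
      _ ≤ (Kc k * Real.sqrt n) * (2 * Real.sqrt M) := by
          apply mul_le_mul_of_nonneg_left _ (by positivity)
          linarith
      _ ≤ (Kc k * Real.sqrt n) * (2 * (Real.sqrt n / Real.sqrt ((L:ℝ)+1))) := by
          apply mul_le_mul_of_nonneg_left _ (by positivity)
          linarith
  have hfin : (n:ℝ)⁻¹ * ((Kc k * Real.sqrt n) * (2 * (Real.sqrt n / Real.sqrt ((L:ℝ)+1))))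
      = 2 * Kc k / Real.sqrt ((L:ℝ)+1) := by
    have hss : Real.sqrt n * Real.sqrt n = (n:ℝ) := Real.mul_self_sqrt (by positivity)
    have hsL : (0:ℝ) < Real.sqrt ((L:ℝ)+1) := Real.sqrt_pos.mpr hL1R
    have h2 : (n:ℝ)⁻¹ * ((Kc k * Real.sqrt n) * (2 * (Real.sqrt n / Real.sqrt ((L:ℝ)+1))))
        = (Real.sqrt n * Real.sqrt n) * ((n:ℝ)⁻¹ * (2 * Kc k / Real.sqrt ((L:ℝ)+1))) := by
      ring
    rw [h2, hss, ← mul_assoc, mul_inv_cancel₀ (ne_of_gt hnR), one_mul]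
  calc (n:ℝ)⁻¹ * ∑ t ∈ Q, aL k (n/t)
      ≤ (n:ℝ)⁻¹ * ((Kc k * Real.sqrt n) * (2 * (Real.sqrt n / Real.sqrt ((L:ℝ)+1)))) := by
        apply mul_le_mul_of_nonneg_left htotal (by positivity)
    _ = 2 * Kc k / Real.sqrt ((L:ℝ)+1) := hfin
    _ = 2 * Kc k / Real.sqrt (L+1) := by norm_num

lemma one_le_fk (n k : ℕ) : 1 ≤ fk n k := by
  rw [fk, Nat.one_le_iff_ne_zero, ← Nat.pos_iff_ne_zero, Finset.card_pos]
  refine ⟨∅, Finset.mem_filter.mpr ⟨Finset.empty_mem_powerset _, ?_⟩⟩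
  intro a ha
  exact absurd ha (Finset.notMem_empty a)

lemma main_tendsto {k : ℕ} (hk : 1 ≤ k) :
    Tendsto (fun n : ℕ => (n:ℝ)⁻¹ * ∑ t ∈ Tn k n, aL k (n/t)) atTop
      (nhds (∑' l, gs k l)) := by
  have hsummable := gs_summable hk
  have hS : HasSum (gs k) (∑' l, gs k l) := hsummable.hasSum
  have hKc := Kc_pos k
  rw [Metric.tendsto_atTop]
  intro ε hε
  obtain ⟨L₀, hL₀⟩ := Metric.tendsto_atTop.mp hS.tendsto_sum_nat (ε/3) (by linarith)
  obtain ⟨L₁, hL₁⟩ := exists_nat_gt ((6 * Kc k / ε)^2)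
  set L := max L₀ L₁ + 1 with hLdef
  have hLL₀ : L₀ ≤ L := by omega
  have hL1L : (L₁:ℝ) ≤ L := by exact_mod_cast (by omega : L₁ ≤ L)
  have hLL₁ : ((6 * Kc k / ε)^2) < (L:ℝ) := lt_of_lt_of_le hL₁ hL1L
  have htailL : 2 * Kc k / Real.sqrt ((L:ℝ)+1) < ε/3 := by
    have h6 : (0:ℝ) ≤ 6 * Kc k / ε := by positivity
    have hsq : 6 * Kc k / ε < Real.sqrt ((L:ℝ)+1) := by
      apply (Real.lt_sqrt h6).mpr
      calc (6*Kc k/ε)^2 < (L:ℝ) := hLL₁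
        _ ≤ (L:ℝ)+1 := by linarith
    have hspos : 0 < Real.sqrt ((L:ℝ)+1) := lt_of_le_of_lt h6 hsq
    rw [div_lt_iff₀ hspos]
    have hmul := mul_lt_mul_of_pos_left hsq (show (0:ℝ) < ε/3 by linarith)
    calc 2 * Kc k = (ε/3) * (6 * Kc k / ε) := by field_simp; ring
      _ < (ε/3) * Real.sqrt ((L:ℝ)+1) := hmul
      _ = ε/3 * Real.sqrt ((L:ℝ)+1) := rfl
  have hhead : Tendsto
      (fun n:ℕ => ∑ i ∈ Finset.range L, ((cfun k n (i+1):ℝ)/n) * aL k (i+1))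
      atTop (nhds (∑ i ∈ Finset.range L, gs k i)) := by
    apply tendsto_finset_sum
    intro i _
    exact (cfun_tendsto k (by omega)).mul_const (aL k (i+1))
  obtain ⟨N, hN⟩ := Metric.tendsto_atTop.mp hhead (ε/3) (by linarith)
  refine ⟨max N 1, fun n hn => ?_⟩
  have hn1 : 1 ≤ n := le_trans (le_max_right N 1) hn
  have hnN : N ≤ n := le_trans (le_max_left N 1) hn
  have hdec := decomp hk L (n := n) hn1
  have htb := tail_bound hk L (n := n) hn1
  have htn := tail_nonneg k L n
  have hHd := hN n hnN
  have hPt := hL₀ L hLL₀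
  rw [Real.dist_eq] at hHd hPt ⊢
  rw [hdec]
  have habs : |(∑ i ∈ Finset.range L, ((cfun k n (i+1):ℝ)/n) * aL k (i+1))
      + (n:ℝ)⁻¹ * ∑ t ∈ (Tn k n).filter (fun t => ¬ (n/t ≤ L)), aL k (n/t)
      - ∑' l, gs k l|
      ≤ |(∑ i ∈ Finset.range L, ((cfun k n (i+1):ℝ)/n) * aL k (i+1))
          - ∑ i ∈ Finset.range L, gs k i|
        + |∑ i ∈ Finset.range L, gs k i - ∑' l, gs k l|
        + ((n:ℝ)⁻¹ * ∑ t ∈ (Tn k n).filter (fun t => ¬ (n/t ≤ L)), aL k (n/t)) := by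
    set H := ∑ i ∈ Finset.range L, ((cfun k n (i+1):ℝ)/n) * aL k (i+1)
    set T := (n:ℝ)⁻¹ * ∑ t ∈ (Tn k n).filter (fun t => ¬ (n/t ≤ L)), aL k (n/t)
    set P := ∑ i ∈ Finset.range L, gs k i
    set S := ∑' l, gs k l
    have h1 : H + T - S = (H - P) + (P - S) + T := by ring
    rw [h1]
    calc |(H - P) + (P - S) + T| ≤ |(H - P) + (P - S)| + |T| := abs_add_le _ _
      _ ≤ |H - P| + |P - S| + |T| := by
          have := abs_add_le (H - P) (P - S)
          linarith
      _ = |H - P| + |P - S| + T := by rw [abs_of_nonneg htn]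
  have htb' : (n:ℝ)⁻¹ * ∑ t ∈ (Tn k n).filter (fun t => ¬ (n/t ≤ L)), aL k (n/t)
      ≤ 2 * Kc k / Real.sqrt ((L:ℝ)+1) := htb
  linarith

/-- For each fixed `k ≥ 1`, `lim_n f(n,k)^{1/n}` exists and equals the convergent
infinite product `∏_l P_k(l)^{(1/l - 1/(l+1)) φ(Dk)/Dk}`. -/
theorem stmt_15 (k : ℕ) (hk : 1 ≤ k) :
    ∃ L : ℝ,
      HasProd (fun l : ℕ => (Pk k (l + 1) : ℝ) ^
        (((1 : ℝ) / (l + 1) - 1 / (l + 2)) * (Nat.totient (Dk k)) / (Dk k))) L ∧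
      Tendsto (fun n : ℕ => (fk n k : ℝ) ^ ((1 : ℝ) / n)) atTop (nhds L) := by
  refine ⟨Real.exp (∑' l, gs k l), ?_, ?_⟩
  · have hS : HasSum (gs k) (∑' l, gs k l) := (gs_summable hk).hasSum
    have hprod := hS.rexp
    have hfun : (fun l : ℕ => (Pk k (l + 1) : ℝ) ^
        (((1 : ℝ) / (l + 1) - 1 / (l + 2)) * (Nat.totient (Dk k)) / (Dk k)))
        = (Real.exp ∘ gs k) := by
      funext l
      have hpos : (0:ℝ) < (Pk k (l+1) : ℝ) := by
        have := one_le_Pk k (l+1)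
        exact_mod_cast lt_of_lt_of_le Nat.zero_lt_one this
      rw [Real.rpow_def_of_pos hpos]
      simp only [Function.comp]
      congr 1
      simp only [gs, wt, aL]
      push_cast
      ring
    rw [hfun]
    exact hprod
  · have hmain := main_tendsto hk
    have hcomp := (Real.continuous_exp.tendsto _).comp hmain
    apply hcomp.congr
    intro n
    show Real.exp ((n:ℝ)⁻¹ * ∑ t ∈ Tn k n, aL k (n/t)) = (fk n k : ℝ) ^ ((1:ℝ)/n)
    have hfkpos : (0:ℝ) < (fk n k : ℝ) := by
      have := one_le_fk n k
      exact_mod_cast lt_of_lt_of_le Nat.zero_lt_one this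
    rw [Real.rpow_def_of_pos hfkpos]
    congr 1
    have hcast : (fk n k : ℝ) = ∏ t ∈ Tn k n, (Pk k (n/t) : ℝ) := by
      rw [fk_eq_prod hk n]
      exact Nat.cast_prod _ _
    have hlog : Real.log (fk n k) = ∑ t ∈ Tn k n, aL k (n/t) := by
      rw [hcast, Real.log_prod]
      · rfl
      · intro t _
        have := one_le_Pk k (n/t)
        have : (0:ℝ) < (Pk k (n/t) : ℝ) := by
          exact_mod_cast lt_of_lt_of_le Nat.zero_lt_one this
        linarith
    rw [hlog]
    ring
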